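/- Let A, B : (0,∞) → ℝ be continuous with B nowhere zero, and let C : (0,∞) → ℝ be differentiable with τ · C'(τ) = A(τ)/B(τ) − 1 for all τ > 0. Define Φ : (0,∞) × ℝ × ℝ → ℝ³ by Φ(τ,θ,φ) = τ e^{C(τ)} ( sin θ cos φ, sin θ sin φ, cos θ ). Then for all (τ,θ,φ): (i) ‖∂Φ/∂τ‖² = e^{2C(τ)} (A(τ)/B(τ))²; (ii) ‖∂Φ/∂θ‖² = e^{2C(τ)} τ²; (iii) ‖∂Φ/∂φ‖² = e^{2C(τ)} τ² sin²θ; (iv) the three partial-derivative vectors ∂Φ/∂τ, ∂Φ/∂θ, ∂Φ/∂φ are pairwise orthogonal; and (v) ‖Φ(τ,θ,φ)‖² = τ² e^{2C(τ)}. -/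

import Mathlib

open Real Set

/-- The three-dimensional Kruskal-type "unwrapping" map
`(τ, θ, φ) ↦ τ e^{C(τ)} (sin θ cos φ, sin θ sin φ, cos θ)`. -/
noncomputable def kruskalMap3 (C : ℝ → ℝ) (τ θ φ : ℝ) : EuclideanSpace ℝ (Fin 3) :=
  (WithLp.equiv 2 (Fin 3 → ℝ)).symm
    ![τ * Real.exp (C τ) * (Real.sin θ * Real.cos φ),
      τ * Real.exp (C τ) * (Real.sin θ * Real.sin φ),
      τ * Real.exp (C τ) * Real.cos θ]

private lemma lift_hasDerivAt {f : ℝ → (Fin 3 → ℝ)} {f' : Fin 3 → ℝ} {x : ℝ}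
    (h : HasDerivAt f f' x) :
    HasDerivAt (fun t => (WithLp.equiv 2 (Fin 3 → ℝ)).symm (f t))
      ((WithLp.equiv 2 (Fin 3 → ℝ)).symm f') x :=
  ((PiLp.continuousLinearEquiv 2 ℝ (fun _ : Fin 3 => ℝ)).symm.toContinuousLinearMap.hasFDerivAt (x := f x)).comp_hasDerivAt x h

private lemma inner_equiv_symm (a b : Fin 3 → ℝ) :
    (inner ℝ ((WithLp.equiv 2 (Fin 3 → ℝ)).symm a) ((WithLp.equiv 2 (Fin 3 → ℝ)).symm b) : ℝ)
      = a 0 * b 0 + a 1 * b 1 + a 2 * b 2 := by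
  simp [PiLp.inner_apply, Fin.sum_univ_three]
  ring

/-- The three-dimensional Kruskal-type unwrapping of a warped cone over `S²`: if
`A, B` are continuous on `(0,∞)` with `B` nowhere zero, and `C` satisfies
`τ C'(τ) = A(τ)/B(τ) − 1`, then the map
`Φ(τ,θ,φ) = τ e^{C(τ)}(sin θ cos φ, sin θ sin φ, cos θ)` satisfies
`‖∂Φ/∂τ‖² = e^{2C}(A/B)²`, `‖∂Φ/∂θ‖² = e^{2C} τ²`, `‖∂Φ/∂φ‖² = e^{2C} τ² sin²θ`,
the three partial derivatives are pairwise orthogonal, and `‖Φ‖² = τ² e^{2C}`. -/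
theorem kruskal_unwrapping_three_dim
    (A B : ℝ → ℝ) (hA : ContinuousOn A (Ioi 0)) (hB : ContinuousOn B (Ioi 0))
    (hBne : ∀ τ ∈ Ioi (0:ℝ), B τ ≠ 0)
    (C : ℝ → ℝ) (hC : ∀ τ ∈ Ioi (0:ℝ), HasDerivAt C ((A τ / B τ - 1) / τ) τ) :
    ∀ τ ∈ Ioi (0:ℝ), ∀ θ φ : ℝ,
      ‖deriv (fun τ' => kruskalMap3 C τ' θ φ) τ‖^2
          = Real.exp (2 * C τ) * (A τ / B τ)^2 ∧
      ‖deriv (fun θ' => kruskalMap3 C τ θ' φ) θ‖^2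
          = Real.exp (2 * C τ) * τ^2 ∧
      ‖deriv (fun φ' => kruskalMap3 C τ θ φ') φ‖^2
          = Real.exp (2 * C τ) * τ^2 * (Real.sin θ)^2 ∧
      (inner ℝ (deriv (fun τ' => kruskalMap3 C τ' θ φ) τ)
             (deriv (fun θ' => kruskalMap3 C τ θ' φ) θ) : ℝ) = 0 ∧
      (inner ℝ (deriv (fun τ' => kruskalMap3 C τ' θ φ) τ)
             (deriv (fun φ' => kruskalMap3 C τ θ φ') φ) : ℝ) = 0 ∧
      (inner ℝ (deriv (fun θ' => kruskalMap3 C τ θ' φ) θ)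
             (deriv (fun φ' => kruskalMap3 C τ θ φ') φ) : ℝ) = 0 ∧
      ‖kruskalMap3 C τ θ φ‖^2 = τ^2 * Real.exp (2 * C τ) := by
  intro τ hτ θ φ
  have hτ0 : τ ≠ 0 := ne_of_gt (mem_Ioi.mp hτ)
  set E := Real.exp (C τ) with hEdef
  set r := A τ / B τ with hrdef
  -- derivative of τ ↦ τ e^{C τ}
  have hg : HasDerivAt (fun t => t * Real.exp (C t)) (E * r) τ := by
    have h1 : HasDerivAt (fun t => t * Real.exp (C t)) _ τ := (hasDerivAt_id τ).mul ((hC τ hτ).exp)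
    convert h1 using 1
    simp only [id]
    field_simp
    ring
  have hderτ : HasDerivAt (fun τ' => kruskalMap3 C τ' θ φ)
      ((WithLp.equiv 2 (Fin 3 → ℝ)).symm
        ![E * r * (Real.sin θ * Real.cos φ),
          E * r * (Real.sin θ * Real.sin φ),
          E * r * Real.cos θ]) τ := by
    apply lift_hasDerivAt
    rw [hasDerivAt_pi]
    intro i
    fin_cases i <;>
      simp only [Matrix.cons_val_zero, Matrix.cons_val_one, Matrix.head_cons,
        Matrix.cons_val_two, Matrix.tail_cons, Fin.isValue]
    · exact hg.mul_const _
    · exact hg.mul_const _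
    · exact hg.mul_const _
  have hderθ : HasDerivAt (fun θ' => kruskalMap3 C τ θ' φ)
      ((WithLp.equiv 2 (Fin 3 → ℝ)).symm
        ![τ * E * (Real.cos θ * Real.cos φ),
          τ * E * (Real.cos θ * Real.sin φ),
          τ * E * (-Real.sin θ)]) θ := by
    apply lift_hasDerivAt
    rw [hasDerivAt_pi]
    intro i
    fin_cases i <;>
      simp only [Matrix.cons_val_zero, Matrix.cons_val_one, Matrix.head_cons,
        Matrix.cons_val_two, Matrix.tail_cons, Fin.isValue]
    · exact ((Real.hasDerivAt_sin θ).mul_const (Real.cos φ)).const_mul (τ * E)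
    · exact ((Real.hasDerivAt_sin θ).mul_const (Real.sin φ)).const_mul (τ * E)
    · exact (Real.hasDerivAt_cos θ).const_mul (τ * E)
  have hderφ : HasDerivAt (fun φ' => kruskalMap3 C τ θ φ')
      ((WithLp.equiv 2 (Fin 3 → ℝ)).symm
        ![τ * E * (Real.sin θ * -Real.sin φ),
          τ * E * (Real.sin θ * Real.cos φ),
          0]) φ := by
    apply lift_hasDerivAt
    rw [hasDerivAt_pi]
    intro i
    fin_cases i <;>
      simp only [Matrix.cons_val_zero, Matrix.cons_val_one, Matrix.head_cons,
        Matrix.cons_val_two, Matrix.tail_cons, Fin.isValue]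
    · exact ((Real.hasDerivAt_cos φ).const_mul (Real.sin θ)).const_mul (τ * E)
    · exact ((Real.hasDerivAt_sin φ).const_mul (Real.sin θ)).const_mul (τ * E)
    · exact hasDerivAt_const φ _
  rw [hderτ.deriv, hderθ.deriv, hderφ.deriv]
  have hs : Real.sin θ ^ 2 + Real.cos θ ^ 2 = 1 := Real.sin_sq_add_cos_sq θ
  have hp : Real.sin φ ^ 2 + Real.cos φ ^ 2 = 1 := Real.sin_sq_add_cos_sq φ
  have hE2 : Real.exp (2 * C τ) = E * E := by
    rw [two_mul, Real.exp_add]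
  refine ⟨?_, ?_, ?_, ?_, ?_, ?_, ?_⟩
  · rw [← real_inner_self_eq_norm_sq, inner_equiv_symm, hE2]
    simp only [Matrix.cons_val_zero, Matrix.cons_val_one, Matrix.head_cons,
      Matrix.cons_val_two, Matrix.tail_cons]
    linear_combination (E * r) ^ 2 * Real.sin θ ^ 2 * hp + (E * r) ^ 2 * hs
  · rw [← real_inner_self_eq_norm_sq, inner_equiv_symm, hE2]
    simp only [Matrix.cons_val_zero, Matrix.cons_val_one, Matrix.head_cons,
      Matrix.cons_val_two, Matrix.tail_cons]
    linear_combination (E * τ) ^ 2 * Real.cos θ ^ 2 * hp + (E * τ) ^ 2 * hs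
  · rw [← real_inner_self_eq_norm_sq, inner_equiv_symm, hE2]
    simp only [Matrix.cons_val_zero, Matrix.cons_val_one, Matrix.head_cons,
      Matrix.cons_val_two, Matrix.tail_cons]
    linear_combination (E * τ) ^ 2 * Real.sin θ ^ 2 * hp
  · rw [inner_equiv_symm]
    simp only [Matrix.cons_val_zero, Matrix.cons_val_one, Matrix.head_cons,
      Matrix.cons_val_two, Matrix.tail_cons]
    linear_combination E ^ 2 * r * τ * Real.sin θ * Real.cos θ * hp
  · rw [inner_equiv_symm]
    simp only [Matrix.cons_val_zero, Matrix.cons_val_one, Matrix.head_cons,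
      Matrix.cons_val_two, Matrix.tail_cons]
    ring
  · rw [inner_equiv_symm]
    simp only [Matrix.cons_val_zero, Matrix.cons_val_one, Matrix.head_cons,
      Matrix.cons_val_two, Matrix.tail_cons]
    ring
  · rw [← real_inner_self_eq_norm_sq, kruskalMap3, inner_equiv_symm, hE2]
    simp only [Matrix.cons_val_zero, Matrix.cons_val_one, Matrix.head_cons,
      Matrix.cons_val_two, Matrix.tail_cons]
    linear_combination (τ * E) ^ 2 * Real.sin θ ^ 2 * hp + (τ * E) ^ 2 * hs
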